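/- Let v : ℝ² → ℝ be a bounded C² function with Δv ∈ L¹(ℝ²). Then ∇v ∈ L²(ℝ²). -/

import Mathlib

open MeasureTheory Real Filter
noncomputable section
abbrev E2 : Type := EuclideanSpace ℝ (Fin 2)
/-- Classical Laplacian on ℝ². -/
def lap (u : E2 → ℝ) (x : E2) : ℝ :=
  ∑ i : Fin 2, fderiv ℝ (fun y => fderiv ℝ u y (EuclideanSpace.single i 1)) x (EuclideanSpace.single i 1)
/-- The set of admissible exponents α in the definition of α_p(K). -/
def alphaSet (K : E2 → ℝ) (p : ℝ) : Set ℝ :=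
  {α : ℝ | Integrable (fun x : E2 => |K x| ^ p * (1 + ‖x‖) ^ (2*α*p + 2*(p-1)))}
/-- α_p(K), with the convention sup ∅ = -∞ (⊥ in `EReal`). -/
def alphaP (K : E2 → ℝ) (p : ℝ) : EReal :=
  sSup ((fun a : ℝ => (a : EReal)) '' alphaSet K p)

local notation "e" i => EuclideanSpace.single i (1:ℝ)

lemma contDiff_D {f : E2 → ℝ} (hf : ContDiff ℝ 2 f) (u : E2) :
    ContDiff ℝ 1 (fun x => fderiv ℝ f x u) := by
  have h : ContDiff ℝ 1 (fderiv ℝ f) := hf.fderiv_right (by norm_num)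
  exact (ContinuousLinearMap.apply ℝ ℝ u).contDiff.comp h

lemma intCC {w f : E2 → ℝ} (hw : HasCompactSupport w) (hf : Continuous f)
    (h : ∀ x, x ∉ tsupport w → f x = 0) : Integrable f := by
  refine hf.integrable_of_hasCompactSupport (hw.mono' ?_)
  intro x hx
  by_contra hc
  exact hx (h x hc)

lemma Dmul {f g : E2 → ℝ} (hf : Differentiable ℝ f) (hg : Differentiable ℝ g) (x u : E2) :
    fderiv ℝ (fun y => f y * g y) x u = f x * fderiv ℝ g x u + g x * fderiv ℝ f x u := by
  rw [fderiv_fun_mul (hf x) (hg x)]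
  simp [smul_eq_mul]

lemma D_zero_of_notin {w : E2 → ℝ} {x : E2} (hx : x ∉ tsupport w) (u : E2) :
    fderiv ℝ w x u = 0 := by
  have : fderiv ℝ w x = 0 := by
    by_contra hc
    exact hx (support_fderiv_subset ℝ (by exact hc))
  simp [this]

lemma tsupport_D_subset (w : E2 → ℝ) (u : E2) :
    tsupport (fun x => fderiv ℝ w x u) ⊆ tsupport w := by
  refine closure_minimal ?_ isClosed_closure
  intro x hx
  by_contra hc
  exact hx (D_zero_of_notin hc u)

lemma tsupport_mul_l (w v : E2 → ℝ) :
    tsupport (fun y => w y * v y) ⊆ tsupport w := by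
  refine closure_minimal ?_ isClosed_closure
  intro x hx
  simp only [Function.mem_support] at hx
  exact subset_closure (fun h0 => hx (by rw [h0, zero_mul]))

lemma cont_lap {f : E2 → ℝ} (hf : ContDiff ℝ 2 f) : Continuous (lap f) := by
  refine continuous_finset_sum _ (fun i _ => ?_)
  exact (ContinuousLinearMap.apply ℝ ℝ (e i)).continuous.comp
    ((contDiff_D hf (e i)).continuous_fderiv one_ne_zero)

lemma lap_zero_of_notin {w : E2 → ℝ} {x : E2} (hx : x ∉ tsupport w) : lap w x = 0 := by
  refine Finset.sum_eq_zero (fun i _ => ?_)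
  exact D_zero_of_notin (fun hc => hx (tsupport_D_subset w (e i) hc)) (e i)

lemma norm_sq_clm (ℓ : E2 →L[ℝ] ℝ) :
    ‖ℓ‖^2 = ∑ i : Fin 2, (ℓ (EuclideanSpace.single i 1))^2 := by
  set y := (InnerProductSpace.toDual ℝ E2).symm ℓ with hy
  have h1 : ‖ℓ‖ = ‖y‖ := ((InnerProductSpace.toDual ℝ E2).symm.norm_map ℓ).symm
  have h2 : ∀ i, ℓ (EuclideanSpace.single i 1) = y i := by
    intro i
    have := InnerProductSpace.toDual_symm_apply (𝕜 := ℝ) (E := E2)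
      (x := EuclideanSpace.single i 1) (y := ℓ)
    rw [← this, ← hy, real_inner_comm]
    simp [EuclideanSpace.inner_single_right, EuclideanSpace.inner_single_left]
  simp only [h1, h2]
  rw [EuclideanSpace.norm_eq, Real.sq_sqrt (by positivity)]
  congr 1; ext i; rw [Real.norm_eq_abs, sq_abs]

lemma key (v w : E2 → ℝ) (hv : ContDiff ℝ 2 v) (hw : ContDiff ℝ 2 w)
    (hcw : HasCompactSupport w) :
    ∫ x, w x * ∑ i : Fin 2, (fderiv ℝ v x (e i))^2
      = (1/2) * (∫ x, (v x * v x) * lap w x) - ∫ x, (w x * v x) * lap v x := by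
  have hv1 : Differentiable ℝ v := hv.differentiable two_ne_zero
  have hw1 : Differentiable ℝ w := hw.differentiable two_ne_zero
  have hDv : ∀ u : E2, ContDiff ℝ 1 (fun x => fderiv ℝ v x u) := contDiff_D hv
  have hDw : ∀ u : E2, ContDiff ℝ 1 (fun x => fderiv ℝ w x u) := contDiff_D hw
  have cDDv : ∀ i : Fin 2, Continuous (fun x =>
      fderiv ℝ (fun y => fderiv ℝ v y (e i)) x (e i)) := fun i =>
    (ContinuousLinearMap.apply ℝ ℝ (e i)).continuous.comp
      ((hDv (e i)).continuous_fderiv one_ne_zero)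
  have cDDw : ∀ i : Fin 2, Continuous (fun x =>
      fderiv ℝ (fun y => fderiv ℝ w y (e i)) x (e i)) := fun i =>
    (ContinuousLinearMap.apply ℝ ℝ (e i)).continuous.comp
      ((hDw (e i)).continuous_fderiv one_ne_zero)
  have hnotin : ∀ (x : E2), x ∉ tsupport w → w x = 0 := fun x hx =>
    image_eq_zero_of_notMem_tsupport hx
  have hDwz : ∀ (x : E2) (u : E2), x ∉ tsupport w → fderiv ℝ w x u = 0 := fun x u hx =>
    D_zero_of_notin hx u
  have hDDwz : ∀ (x : E2) (i : Fin 2), x ∉ tsupport w →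
      fderiv ℝ (fun y => fderiv ℝ w y (e i)) x (e i) = 0 := by
    intro x i hx
    exact D_zero_of_notin (fun hc => hx (tsupport_D_subset w (e i) hc)) (e i)
  have hDwvz : ∀ (x : E2) (i : Fin 2), x ∉ tsupport w →
      fderiv ℝ (fun y => w y * v y) x (e i) = 0 := by
    intro x i hx
    exact D_zero_of_notin (fun hc => hx (tsupport_mul_l w v hc)) (e i)
  have int1 : ∀ i : Fin 2, Integrable (fun x =>
      (w x * v x) * fderiv ℝ (fun y => fderiv ℝ v y (e i)) x (e i)) := by
    intro i
    refine intCC hcw (((hw.continuous.mul hv.continuous)).mul (cDDv i)) ?_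
    intro x hx; simp [hnotin x hx]
  have int2 : ∀ i : Fin 2, Integrable (fun x =>
      fderiv ℝ (fun y => w y * v y) x (e i) * fderiv ℝ v x (e i)) := by
    intro i
    refine intCC hcw (((contDiff_D (hw.mul hv) (e i)).continuous).mul (hDv (e i)).continuous) ?_
    intro x hx; simp [hDwvz x i hx]
  have int3 : ∀ i : Fin 2, Integrable (fun x =>
      (w x * v x) * fderiv ℝ v x (e i)) := by
    intro i
    refine intCC hcw ((hw.continuous.mul hv.continuous).mul (hDv (e i)).continuous) ?_
    intro x hx; simp [hnotin x hx]
  have int4 : ∀ i : Fin 2, Integrable (fun x =>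
      (v x * v x) * fderiv ℝ (fun y => fderiv ℝ w y (e i)) x (e i)) := by
    intro i
    refine intCC hcw ((hv.continuous.mul hv.continuous).mul (cDDw i)) ?_
    intro x hx; simp [hDDwz x i hx]
  have int5 : ∀ i : Fin 2, Integrable (fun x =>
      fderiv ℝ (fun y => v y * v y) x (e i) * fderiv ℝ w x (e i)) := by
    intro i
    refine intCC hcw (((contDiff_D (hv.mul hv) (e i)).continuous).mul (hDw (e i)).continuous) ?_
    intro x hx; simp [hDwz x _ hx]
  have int6 : ∀ i : Fin 2, Integrable (fun x =>
      (v x * v x) * fderiv ℝ w x (e i)) := by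
    intro i
    refine intCC hcw ((hv.continuous.mul hv.continuous).mul (hDw (e i)).continuous) ?_
    intro x hx; simp [hDwz x _ hx]
  have int7 : ∀ i : Fin 2, Integrable (fun x => w x * (fderiv ℝ v x (e i))^2) := by
    intro i
    refine intCC hcw (hw.continuous.mul (((hDv (e i)).continuous).pow 2)) ?_
    intro x hx; simp [hnotin x hx]
  have int8 : ∀ i : Fin 2, Integrable (fun x =>
      v x * (fderiv ℝ w x (e i) * fderiv ℝ v x (e i))) := by
    intro i
    refine intCC hcw (hv.continuous.mul (((hDw (e i)).continuous).mul (hDv (e i)).continuous)) ?_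
    intro x hx; simp [hDwz x _ hx]
  have A : ∀ i : Fin 2, ∫ x, (w x * v x) * fderiv ℝ (fun y => fderiv ℝ v y (e i)) x (e i)
      = - ∫ x, fderiv ℝ (fun y => w y * v y) x (e i) * fderiv ℝ v x (e i) := fun i =>
    integral_mul_fderiv_eq_neg_fderiv_mul_of_integrable (int2 i) (int1 i) (int3 i)
      (fun x _ => (hw1.mul hv1) x) (fun x _ => (hDv (e i)).differentiable one_ne_zero x)
  have B : ∀ i : Fin 2, ∫ x, (v x * v x) * fderiv ℝ (fun y => fderiv ℝ w y (e i)) x (e i)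
      = - ∫ x, fderiv ℝ (fun y => v y * v y) x (e i) * fderiv ℝ w x (e i) := fun i =>
    integral_mul_fderiv_eq_neg_fderiv_mul_of_integrable (int5 i) (int4 i) (int6 i)
      (fun x _ => (hv1.mul hv1) x) (fun x _ => (hDw (e i)).differentiable one_ne_zero x)
  have A' : ∀ i : Fin 2, ∫ x, (w x * v x) * fderiv ℝ (fun y => fderiv ℝ v y (e i)) x (e i)
      = - ((∫ x, w x * (fderiv ℝ v x (e i))^2)
          + ∫ x, v x * (fderiv ℝ w x (e i) * fderiv ℝ v x (e i))) := by
    intro i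
    rw [A i, ← integral_add (int7 i) (int8 i)]
    congr 1
    apply integral_congr_ae; filter_upwards with x
    rw [Dmul hw1 hv1]
    ring
  have B' : ∀ i : Fin 2, ∫ x, (v x * v x) * fderiv ℝ (fun y => fderiv ℝ w y (e i)) x (e i)
      = - (2 * ∫ x, v x * (fderiv ℝ w x (e i) * fderiv ℝ v x (e i))) := by
    intro i
    rw [B i, ← integral_const_mul]
    congr 1
    apply integral_congr_ae; filter_upwards with x
    rw [Dmul hv1 hv1]
    ring
  have SA : ∫ x, (w x * v x) * lap v x
      = ∑ i : Fin 2, ∫ x, (w x * v x) * fderiv ℝ (fun y => fderiv ℝ v y (e i)) x (e i) := by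
    rw [← integral_finset_sum _ (fun i _ => int1 i)]
    apply integral_congr_ae; filter_upwards with x
    rw [lap, Finset.mul_sum]
  have SB : ∫ x, (v x * v x) * lap w x
      = ∑ i : Fin 2, ∫ x, (v x * v x) * fderiv ℝ (fun y => fderiv ℝ w y (e i)) x (e i) := by
    rw [← integral_finset_sum _ (fun i _ => int4 i)]
    apply integral_congr_ae; filter_upwards with x
    rw [lap, Finset.mul_sum]
  have SG : ∫ x, w x * ∑ i : Fin 2, (fderiv ℝ v x (e i))^2
      = ∑ i : Fin 2, ∫ x, w x * (fderiv ℝ v x (e i))^2 := by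
    rw [← integral_finset_sum _ (fun i _ => int7 i)]
    apply integral_congr_ae; filter_upwards with x
    rw [Finset.mul_sum]
  have ST : ∫ x, v x * ∑ i : Fin 2, (fderiv ℝ w x (e i) * fderiv ℝ v x (e i))
      = ∑ i : Fin 2, ∫ x, v x * (fderiv ℝ w x (e i) * fderiv ℝ v x (e i)) := by
    rw [← integral_finset_sum _ (fun i _ => int8 i)]
    apply integral_congr_ae; filter_upwards with x
    rw [Finset.mul_sum]
  have EA : ∫ x, (w x * v x) * lap v x
      = - ((∫ x, w x * ∑ i : Fin 2, (fderiv ℝ v x (e i))^2)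
          + ∫ x, v x * ∑ i : Fin 2, (fderiv ℝ w x (e i) * fderiv ℝ v x (e i))) := by
    rw [SA, SG, ST, ← Finset.sum_add_distrib, ← Finset.sum_neg_distrib]
    exact Finset.sum_congr rfl (fun i _ => A' i)
  have EB : ∫ x, (v x * v x) * lap w x
      = - (2 * ∫ x, v x * ∑ i : Fin 2, (fderiv ℝ w x (e i) * fderiv ℝ v x (e i))) := by
    rw [SB, ST, Finset.mul_sum, ← Finset.sum_neg_distrib]
    exact Finset.sum_congr rfl (fun i _ => B' i)
  rw [EA, EB]
  ring

lemma D_comp_smul {g : E2 → ℝ} (hg : Differentiable ℝ g) (c : ℝ) (x u : E2) :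
    fderiv ℝ (fun y => g (c • y)) x u = c * fderiv ℝ g (c • x) u := by
  have h1 : HasFDerivAt (fun y : E2 => c • y) (c • ContinuousLinearMap.id ℝ E2) x :=
    (hasFDerivAt_id x).const_smul c
  have h2 : HasFDerivAt (fun y => g (c • y))
      ((fderiv ℝ g (c • x)).comp (c • ContinuousLinearMap.id ℝ E2)) x :=
    (hg (c • x)).hasFDerivAt.comp x h1
  rw [h2.fderiv]
  simp [smul_eq_mul, mul_comm]

lemma lap_comp_smul {g : E2 → ℝ} (hg : ContDiff ℝ 2 g) (c : ℝ) (x : E2) :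
    lap (fun y => g (c • y)) x = c^2 * lap g (c • x) := by
  have hg1 : Differentiable ℝ g := hg.differentiable two_ne_zero
  unfold lap
  rw [Finset.mul_sum]
  refine Finset.sum_congr rfl (fun i _ => ?_)
  have hfun : (fun y => fderiv ℝ (fun z => g (c • z)) y (e i))
      = fun y => c * fderiv ℝ g (c • y) (e i) := by
    funext y; exact D_comp_smul hg1 c y _
  rw [hfun]
  have hDg : Differentiable ℝ (fun x => fderiv ℝ g x (e i)) :=
    (contDiff_D hg _).differentiable one_ne_zero
  have hcomp : DifferentiableAt ℝ (fun y => fderiv ℝ g (c • y) (e i)) x := by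
    have : DifferentiableAt ℝ (fun y : E2 => c • y) x := (differentiable_id.const_smul c) x
    exact (hDg (c • x)).comp x this
  rw [fderiv_const_mul hcomp]
  have := D_comp_smul (g := fun x => fderiv ℝ g x (e i)) hDg c x (e i)
  simp only [ContinuousLinearMap.coe_smul', Pi.smul_apply, smul_eq_mul] at this ⊢
  rw [this]
  ring

lemma integral_abs_lap_comp_smul {g : E2 → ℝ} (hg : ContDiff ℝ 2 g) {ρ : ℝ} (hρ : 0 < ρ) :
    ∫ x, |lap (fun y => g (ρ⁻¹ • y)) x| = ∫ x, |lap g x| := by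
  have h1 : ∀ x : E2, |lap (fun y => g (ρ⁻¹ • y)) x| = (ρ⁻¹)^2 * |lap g (ρ⁻¹ • x)| := by
    intro x
    rw [lap_comp_smul hg, abs_mul, abs_of_nonneg (by positivity : (0:ℝ) ≤ (ρ⁻¹)^2)]
  simp only [h1]
  rw [integral_const_mul, Measure.integral_comp_smul volume (fun y => |lap g y|) ρ⁻¹]
  have hfr : Module.finrank ℝ E2 = 2 := finrank_euclideanSpace_fin
  rw [hfr]
  rw [smul_eq_mul, abs_of_nonneg (by positivity : (0:ℝ) ≤ ((ρ⁻¹ ^ 2)⁻¹))]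
  rw [← mul_assoc]
  have : (ρ⁻¹)^2 * (ρ⁻¹ ^ 2)⁻¹ = 1 := by
    field_simp
  rw [this, one_mul]

theorem stmt4 (v : E2 → ℝ) (hv : ContDiff ℝ 2 v) (hb : ∃ M : ℝ, ∀ x, |v x| ≤ M)
    (hΔ : Integrable (fun x => lap v x)) :
    MemLp (fun x => fderiv ℝ v x) 2 (volume : Measure E2) := by
  obtain ⟨M, hM⟩ := hb
  have hM0 : 0 ≤ M := le_trans (abs_nonneg _) (hM 0)
  set η : ContDiffBump (0:E2) := ⟨1, 2, one_pos, one_lt_two⟩ with hη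
  set I1 : ℝ := ∫ x, |lap (⇑η) x| with hI1
  have hI1nonneg : 0 ≤ I1 := integral_nonneg (fun x => abs_nonneg _)
  set J : ℝ := ∫ x, |lap v x| with hJ
  have hJ0 : 0 ≤ J := integral_nonneg (fun x => abs_nonneg _)
  set C : ℝ := (1/2) * (M^2 * I1) + M * J with hC
  set g : E2 → ℝ := fun x => ∑ i : Fin 2, (fderiv ℝ v x (e i))^2 with hg
  have hgc : Continuous g := by
    refine continuous_finset_sum _ (fun i _ => ?_)
    exact ((contDiff_D hv (e i)).continuous).pow 2
  have hg0 : ∀ x, 0 ≤ g x := fun x => Finset.sum_nonneg (fun i _ => sq_nonneg _)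
  -- main uniform bound on balls
  have main : ∀ ρ : ℝ, 0 < ρ → ∫ x in Metric.ball (0:E2) ρ, g x ≤ C := by
    intro ρ hρ
    set w : E2 → ℝ := fun x => η (ρ⁻¹ • x) with hwdef
    have hw2 : ContDiff ℝ 2 w := η.contDiff.comp (contDiff_id.const_smul ρ⁻¹)
    have hcs : HasCompactSupport w :=
      η.hasCompactSupport.comp_smul (inv_ne_zero hρ.ne')
    have hwn : ∀ x, 0 ≤ w x := fun x => η.nonneg
    have hw1 : ∀ x, w x ≤ 1 := fun x => η.le_one
    have hone : ∀ x : E2, ‖x‖ ≤ ρ → w x = 1 := by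
      intro x hx
      refine η.one_of_mem_closedBall ?_
      rw [Metric.mem_closedBall, dist_zero_right, norm_smul, Real.norm_eq_abs,
        abs_of_nonneg (by positivity : (0:ℝ) ≤ ρ⁻¹)]
      calc ρ⁻¹ * ‖x‖ ≤ ρ⁻¹ * ρ := by
            exact mul_le_mul_of_nonneg_left hx (by positivity)
        _ = 1 := by field_simp
      -- η.rIn = 1
    have hwz : ∀ x : E2, x ∉ tsupport w → w x = 0 := fun x hx =>
      image_eq_zero_of_notMem_tsupport hx
    have hkey := key v w hv hw2 hcs
    have hlapw_cont : Continuous (lap w) := cont_lap hw2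
    -- bound on ∫ v² lap w
    have intA : Integrable (fun x => (v x * v x) * lap w x) := by
      refine intCC hcs ((hv.continuous.mul hv.continuous).mul hlapw_cont) ?_
      intro x hx; simp [lap_zero_of_notin hx]
    have intB : Integrable (fun x => M^2 * |lap w x|) := by
      refine Integrable.const_mul ?_ _
      refine intCC hcs hlapw_cont.abs ?_
      intro x hx; simp [lap_zero_of_notin hx]
    have bound1 : ∫ x, (v x * v x) * lap w x ≤ M^2 * I1 := by
      have step : ∫ x, (v x * v x) * lap w x ≤ ∫ x, M^2 * |lap w x| := by
        refine integral_mono intA intB (fun x => ?_)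
        have h1 : (v x * v x) * lap w x ≤ |(v x * v x) * lap w x| := le_abs_self _
        have h2 : |(v x * v x) * lap w x| ≤ M^2 * |lap w x| := by
          rw [abs_mul, abs_mul]
          have hvx := hM x
          have : |v x| * |v x| ≤ M * M :=
            mul_le_mul hvx hvx (abs_nonneg _) hM0
          nlinarith [abs_nonneg (lap w x)]
        linarith
      rw [integral_const_mul] at step
      have hscale : ∫ x, |lap w x| = I1 := by
        rw [hI1]
        exact integral_abs_lap_comp_smul η.contDiff hρ
      rw [hscale] at step
      exact step
    -- bound on -∫ (w v) lap v
    have intC2 : Integrable (fun x => (w x * v x) * lap v x) := by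
      refine intCC hcs ((hw2.continuous.mul hv.continuous).mul (cont_lap hv)) ?_
      intro x hx; simp [hwz x hx]
    have bound2 : - ∫ x, (w x * v x) * lap v x ≤ M * J := by
      rw [← integral_neg]
      have intD : Integrable (fun x => M * |lap v x|) := hΔ.abs.const_mul M
      have step : ∫ x, -((w x * v x) * lap v x) ≤ ∫ x, M * |lap v x| := by
        refine integral_mono intC2.neg intD (fun x => ?_)
        have h1 : -((w x * v x) * lap v x) ≤ |(w x * v x) * lap v x| := neg_le_abs _
        have h2 : |(w x * v x) * lap v x| ≤ M * |lap v x| := by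
          rw [abs_mul, abs_mul, abs_of_nonneg (hwn x)]
          have hvx := hM x
          have hle : w x * |v x| ≤ 1 * M :=
            mul_le_mul (hw1 x) hvx (abs_nonneg _) zero_le_one
          nlinarith [abs_nonneg (lap v x)]
        linarith
      rw [integral_const_mul] at step
      exact step
    have hS : ∫ x, w x * g x ≤ C := by
      rw [hkey]
      rw [hC]
      have := bound1
      have := bound2
      linarith
    -- compare ball integral with weighted integral
    have hwg_int : Integrable (fun x => w x * g x) := by
      refine intCC hcs (hw2.continuous.mul hgc) ?_
      intro x hx; simp [hwz x hx]
    have igb : IntegrableOn g (Metric.ball (0:E2) ρ) := by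
      have : IntegrableOn g (Metric.closedBall (0:E2) ρ) :=
        hgc.continuousOn.integrableOn_compact (isCompact_closedBall _ _)
      exact this.mono_set Metric.ball_subset_closedBall
    have hball : ∫ x in Metric.ball (0:E2) ρ, g x ≤ ∫ x, w x * g x := by
      rw [← integral_indicator Metric.isOpen_ball.measurableSet]
      refine integral_mono (igb.integrable_indicator Metric.isOpen_ball.measurableSet)
        hwg_int (fun x => ?_)
      by_cases hx : x ∈ Metric.ball (0:E2) ρ
      · rw [Set.indicator_of_mem hx]
        have hx' : ‖x‖ ≤ ρ := le_of_lt (by simpa [Metric.mem_ball, dist_zero_right] using hx)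
        rw [hone x hx', one_mul]
      · rw [Set.indicator_of_notMem hx]
        exact mul_nonneg (hwn x) (hg0 x)
    linarith
  -- conclude
  have hmeas : AEStronglyMeasurable (fun x => fderiv ℝ v x) (volume : Measure E2) :=
    (hv.continuous_fderiv two_ne_zero).aestronglyMeasurable
  rw [memLp_two_iff_integrable_sq_norm hmeas]
  have hgint : Integrable g := by
    refine ⟨hgc.aestronglyMeasurable, ?_⟩
    rw [hasFiniteIntegral_iff_ofReal (Eventually.of_forall hg0)]
    set F : ℕ → E2 → ENNReal := fun n =>
      (Metric.ball (0:E2) ((n:ℝ)+1)).indicator (fun x => ENNReal.ofReal (g x)) with hF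
    have hmF : ∀ n, Measurable (F n) := fun n =>
      (hgc.measurable.ennreal_ofReal).indicator Metric.isOpen_ball.measurableSet
    have hmono : Monotone F := by
      intro n m hnm
      refine Set.indicator_le_indicator_of_subset (Metric.ball_subset_ball ?_)
        (fun x => zero_le)
      have : (n:ℝ) ≤ m := Nat.cast_le.mpr hnm
      linarith
    have hsup : ∀ x, (⨆ n, F n x) = ENNReal.ofReal (g x) := by
      intro x
      obtain ⟨n, hn⟩ := exists_nat_gt ‖x‖
      apply le_antisymm
      · exact iSup_le (fun m => Set.indicator_le_self _ _ x)
      · refine le_trans ?_ (le_iSup (fun n => F n x) n)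
        have hx : x ∈ Metric.ball (0:E2) ((n:ℝ)+1) := by
          rw [Metric.mem_ball, dist_zero_right]
          linarith
        rw [hF]
        simp only [Set.indicator_of_mem hx]
        exact le_rfl
    calc ∫⁻ x, ENNReal.ofReal (g x)
        = ∫⁻ x, ⨆ n, F n x := by
          refine lintegral_congr (fun x => ?_)
          rw [hsup]
      _ = ⨆ n, ∫⁻ x, F n x := lintegral_iSup hmF hmono
      _ ≤ ENNReal.ofReal C := by
          refine iSup_le (fun n => ?_)
          rw [hF]
          simp only []
          rw [lintegral_indicator Metric.isOpen_ball.measurableSet]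
          have hpos : (0:ℝ) < (n:ℝ)+1 := by positivity
          have igb : IntegrableOn g (Metric.ball (0:E2) ((n:ℝ)+1)) := by
            have : IntegrableOn g (Metric.closedBall (0:E2) ((n:ℝ)+1)) :=
              hgc.continuousOn.integrableOn_compact (isCompact_closedBall _ _)
            exact this.mono_set Metric.ball_subset_closedBall
          rw [← ofReal_integral_eq_lintegral_ofReal igb (Eventually.of_forall hg0)]
          exact ENNReal.ofReal_le_ofReal (main _ hpos)
      _ < ⊤ := ENNReal.ofReal_lt_top
  have heq : (fun x => ‖fderiv ℝ v x‖^2) = g := by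
    funext x
    rw [hg]
    exact norm_sq_clm _
  rw [heq]
  exact hgint
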